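/- For every ν > 0 and every z ∈ ℝ, the modified parabolic cylinder function is strictly positive: D̃_ν(z) > 0. -/

import Mathlib

open Real Filter Finset MeasureTheory
open Set
open scoped ENNReal NNReal

/-- The even power series `u(z) = 1 + ∑_{k=1}^∞ (∏_{j=0}^{k-1}(ν+2j)) z^{2k}/(2k)!`
(the `k = 0` term of the `tsum` equals `1`). -/
noncomputable def evenSeries (ν z : ℝ) : ℝ :=
  ∑' k : ℕ, (∏ j ∈ Finset.range k, (ν + 2 * (j : ℝ))) * z ^ (2 * k) / (Nat.factorial (2 * k))

/-- The odd power series `v(z) = ∑_{k=0}^∞ (∏_{j=0}^{k-1}(ν+2j+1)) z^{2k+1}/(2k+1)!`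
(the `k = 0` term equals `z`). -/
noncomputable def oddSeries (ν z : ℝ) : ℝ :=
  ∑' k : ℕ, (∏ j ∈ Finset.range k, (ν + 2 * (j : ℝ) + 1)) * z ^ (2 * k + 1) /
    (Nat.factorial (2 * k + 1))

/-- The modified parabolic cylinder function
`D̃_ν(y) = 2^{−ν/2} √π [ (1 + ∑_{k≥1} ∏_{j=0}^{k-1}(ν+2j) y^{2k}/(2k)!)/Γ((ν+1)/2)
  − √2 y (1 + ∑_{k≥1} ∏_{j=0}^{k-1}(ν+2j+1) y^{2k}/(2k+1)!)/Γ(ν/2) ]`,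
which equals `e^{y²/4} D_{−ν}(y)` for the parabolic cylinder function `D_{−ν}`.
Note `y * (1 + ∑_{k≥1} ∏_{j=0}^{k-1}(ν+2j+1) y^{2k}/(2k+1)!) = oddSeries ν y`. -/
noncomputable def Dtilde (ν : ℝ) (y : ℝ) : ℝ :=
  (2 : ℝ) ^ (-ν / 2) * Real.sqrt Real.pi *
    (evenSeries ν y / Real.Gamma ((ν + 1) / 2) -
      Real.sqrt 2 * oddSeries ν y / Real.Gamma (ν / 2))

private lemma hasSum_exp_real (x : ℝ) :
    HasSum (fun n : ℕ => x ^ n / (Nat.factorial n : ℝ)) (Real.exp x) := by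
  rw [Real.exp_eq_exp_ℝ]
  simpa [div_eq_inv_mul, smul_eq_mul] using NormedSpace.exp_series_hasSum_exp' (𝕂 := ℝ) x

private lemma Gamma_add_nat' {x : ℝ} (hx : 0 < x) (k : ℕ) :
    Real.Gamma (x + k) = Real.Gamma x * ∏ j ∈ Finset.range k, (x + j) := by
  induction k with
  | zero => simp
  | succ n ih =>
    have h : x + ((n : ℕ) + 1 : ℕ) = (x + n) + 1 := by push_cast; ring
    have hxn : (x + (n : ℝ)) ≠ 0 := by positivity
    rw [h, Real.Gamma_add_one hxn, ih, Finset.prod_range_succ]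
    ring

private lemma moment_eq {ν : ℝ} (hν : 0 < ν) (n : ℕ) :
    ∫ t in Ioi (0:ℝ), t ^ (ν - 1 + n) * Real.exp (-(t ^ 2) / 2) =
      (2:ℝ) ^ ((ν + n) / 2 - 1) * Real.Gamma ((ν + n) / 2) := by
  have hq : (-1 : ℝ) < ν - 1 + n := by
    have : (0:ℝ) ≤ n := Nat.cast_nonneg n
    linarith
  have h := integral_rpow_mul_exp_neg_mul_rpow (p := 2) (q := ν - 1 + n) (b := 1/2)
    two_pos hq one_half_pos
  have hL : (∫ x in Ioi (0:ℝ), x ^ (ν - 1 + n) * Real.exp (-(1/2) * x ^ (2:ℝ)))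
      = ∫ t in Ioi (0:ℝ), t ^ (ν - 1 + n) * Real.exp (-(t ^ 2) / 2) := by
    refine setIntegral_congr_fun measurableSet_Ioi (fun x hx => ?_)
    rw [show x ^ (2:ℝ) = x ^ (2:ℕ) from Real.rpow_natCast x 2]
    ring_nf
  rw [hL] at h
  rw [h]
  have h2 : ((1:ℝ)/2) ^ (-(ν - 1 + ↑n + 1) / 2) = (2:ℝ) ^ ((ν + n) / 2) := by
    rw [one_div, Real.inv_rpow (by norm_num : (0:ℝ) ≤ 2),
      ← Real.rpow_neg (by norm_num : (0:ℝ) ≤ 2)]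
    congr 1
    ring
  rw [h2, show (ν - 1 + ↑n + 1) / 2 = (ν + n) / 2 by ring]
  rw [show (2:ℝ) ^ ((ν + ↑n) / 2 - 1) = 2 ^ ((ν + ↑n) / 2) * 2 ^ (-1 : ℝ) by
    rw [← Real.rpow_add two_pos]; ring_nf]
  rw [Real.rpow_neg_one]
  ring

private lemma integrableOn_aux {ν : ℝ} (hν : 0 < ν) (c : ℝ) :
    IntegrableOn (fun t : ℝ => t ^ (ν - 1) * Real.exp (-(t ^ 2) / 2 + c * t)) (Ioi 0) := by
  have hbase : IntegrableOn
      (fun t : ℝ => Real.exp (c ^ 2) * (t ^ (ν - 1) * Real.exp (-(1/4) * t ^ 2)))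
      (Ioi 0) :=
    (integrableOn_rpow_mul_exp_neg_mul_sq (by norm_num) (by linarith)).const_mul _
  refine hbase.mono' ?_ ?_
  · apply Measurable.aestronglyMeasurable
    fun_prop
  · rw [ae_restrict_iff' measurableSet_Ioi]
    filter_upwards with t ht
    have htpos : (0:ℝ) < t := ht
    have h1 : (0:ℝ) ≤ t ^ (ν - 1) := Real.rpow_nonneg htpos.le _
    rw [norm_mul, Real.norm_of_nonneg h1, Real.norm_of_nonneg (Real.exp_nonneg _)]
    have hexp : Real.exp (-(t ^ 2) / 2 + c * t) ≤ Real.exp (c ^ 2) * Real.exp (-(1/4) * t ^ 2) := by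
      rw [← Real.exp_add]
      apply Real.exp_le_exp.mpr
      nlinarith [sq_nonneg (t / 2 - c)]
    calc t ^ (ν - 1) * Real.exp (-(t ^ 2) / 2 + c * t)
        ≤ t ^ (ν - 1) * (Real.exp (c ^ 2) * Real.exp (-(1/4) * t ^ 2)) :=
          mul_le_mul_of_nonneg_left hexp h1
      _ = Real.exp (c ^ 2) * (t ^ (ν - 1) * Real.exp (-(1/4) * t ^ 2)) := by ring

private lemma integral_pos_aux {ν : ℝ} (hν : 0 < ν) (c : ℝ) :
    0 < ∫ t in Ioi (0:ℝ), t ^ (ν - 1) * Real.exp (-(t ^ 2) / 2 + c * t) := by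
  have hint := integrableOn_aux hν c
  have hnn : 0 ≤ᵐ[volume.restrict (Ioi (0:ℝ))]
      fun t : ℝ => t ^ (ν - 1) * Real.exp (-(t ^ 2) / 2 + c * t) := by
    filter_upwards [ae_restrict_mem measurableSet_Ioi] with t ht
    exact mul_nonneg (Real.rpow_nonneg (le_of_lt ht) _) (Real.exp_nonneg _)
  rw [setIntegral_pos_iff_support_of_nonneg_ae hnn hint]
  have hsub : Ioi (0:ℝ) ⊆ Function.support
      (fun t : ℝ => t ^ (ν - 1) * Real.exp (-(t ^ 2) / 2 + c * t)) := by
    intro t ht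
    have : (0:ℝ) < t ^ (ν - 1) * Real.exp (-(t ^ 2) / 2 + c * t) :=
      mul_pos (Real.rpow_pos_of_pos ht _) (Real.exp_pos _)
    exact ne_of_gt this
  calc (0:ℝ≥0∞) < volume (Ioi (0:ℝ)) := by simp [Real.volume_Ioi]
    _ ≤ volume (Function.support
        (fun t : ℝ => t ^ (ν - 1) * Real.exp (-(t ^ 2) / 2 + c * t)) ∩ Ioi 0) := by
        apply measure_mono
        intro t ht
        exact ⟨hsub ht, ht⟩

private lemma key {ν : ℝ} (hν : 0 < ν) (z : ℝ) :
    0 < Real.Gamma (ν / 2) * evenSeries ν z -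
        Real.sqrt 2 * Real.Gamma ((ν + 1) / 2) * oddSeries ν z := by
  set f : ℕ → ℝ → ℝ := fun n t =>
    ((-z) ^ n / (Nat.factorial n : ℝ)) * (t ^ (ν - 1 + n) * Real.exp (-(t ^ 2) / 2)) with hf
  have hmeas : ∀ n, AEStronglyMeasurable (f n) (volume.restrict (Ioi 0)) := by
    intro n
    apply Measurable.aestronglyMeasurable
    fun_prop
  -- pointwise sum
  have hId : ∀ t ∈ Ioi (0:ℝ), HasSum (fun n => f n t)
      (t ^ (ν - 1) * Real.exp (-(t ^ 2) / 2 + (-z) * t)) := by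
    intro t ht
    have h1 := (hasSum_exp_real (-z * t)).mul_left (t ^ (ν - 1) * Real.exp (-(t ^ 2) / 2))
    have h2 : ∀ n : ℕ, t ^ (ν - 1) * Real.exp (-(t ^ 2) / 2) *
        ((-z * t) ^ n / (Nat.factorial n : ℝ)) = f n t := by
      intro n
      rw [hf]
      simp only
      rw [Real.rpow_add ht, Real.rpow_natCast, mul_pow]
      ring
    rw [show t ^ (ν - 1) * Real.exp (-(t ^ 2) / 2 + (-z) * t)
        = t ^ (ν - 1) * Real.exp (-(t ^ 2) / 2) * Real.exp (-z * t) by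
      rw [Real.exp_add]; ring]
    exact h1.congr_fun (fun n => (h2 n).symm)
  -- norm pointwise sum
  have hNorm : ∀ t ∈ Ioi (0:ℝ), HasSum (fun n => ‖f n t‖)
      (t ^ (ν - 1) * Real.exp (-(t ^ 2) / 2 + |z| * t)) := by
    intro t ht
    have h1 := (hasSum_exp_real (|z| * t)).mul_left (t ^ (ν - 1) * Real.exp (-(t ^ 2) / 2))
    have h2 : ∀ n : ℕ, t ^ (ν - 1) * Real.exp (-(t ^ 2) / 2) *
        ((|z| * t) ^ n / (Nat.factorial n : ℝ)) = ‖f n t‖ := by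
      intro n
      rw [hf]
      simp only
      rw [norm_mul, norm_div, norm_pow, norm_neg, Real.norm_eq_abs (z),
        Real.norm_of_nonneg (by positivity : (0:ℝ) ≤ (Nat.factorial n : ℝ)),
        Real.norm_of_nonneg
          (mul_nonneg (Real.rpow_nonneg (le_of_lt ht) _) (Real.exp_nonneg _)),
        Real.rpow_add ht, Real.rpow_natCast, mul_pow]
      ring
    rw [show t ^ (ν - 1) * Real.exp (-(t ^ 2) / 2 + |z| * t)
        = t ^ (ν - 1) * Real.exp (-(t ^ 2) / 2) * Real.exp (|z| * t) by
      rw [Real.exp_add]; ring]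
    exact h1.congr_fun (fun n => (h2 n).symm)
  -- lintegral bound
  have hbound : (∑' n, ∫⁻ t, ‖f n t‖₊ ∂(volume.restrict (Ioi 0))) ≠ ⊤ := by
    rw [← lintegral_tsum (fun n => (hmeas n).aemeasurable.nnnorm.coe_nnreal_ennreal)]
    have hcong : ∀ᵐ t ∂(volume.restrict (Ioi (0:ℝ))),
        (∑' n, (‖f n t‖₊ : ℝ≥0∞)) =
          ENNReal.ofReal (t ^ (ν - 1) * Real.exp (-(t ^ 2) / 2 + |z| * t)) := by
      filter_upwards [ae_restrict_mem measurableSet_Ioi] with t ht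
      have hs := hNorm t ht
      calc (∑' n, (‖f n t‖₊ : ℝ≥0∞)) = ∑' n, ENNReal.ofReal ‖f n t‖ := by
            simp_rw [ofReal_norm, enorm_eq_nnnorm]
        _ = ENNReal.ofReal (∑' n, ‖f n t‖) :=
            (ENNReal.ofReal_tsum_of_nonneg (fun n => norm_nonneg _) hs.summable).symm
        _ = _ := by rw [hs.tsum_eq]
    rw [lintegral_congr_ae hcong]
    exact (integrableOn_aux hν |z|).lintegral_lt_top.ne
  -- swap
  have hswap := integral_tsum hmeas hbound
  have hLHS : (∫ t in Ioi (0:ℝ), ∑' n, f n t) =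
      ∫ t in Ioi (0:ℝ), t ^ (ν - 1) * Real.exp (-(t ^ 2) / 2 + (-z) * t) :=
    setIntegral_congr_fun measurableSet_Ioi (fun t ht => (hId t ht).tsum_eq)
  set a : ℕ → ℝ := fun n =>
    ((-z) ^ n / (Nat.factorial n : ℝ)) * ((2:ℝ) ^ ((ν + n) / 2 - 1) * Real.Gamma ((ν + n) / 2))
    with ha
  have han : ∀ n, (∫ t in Ioi (0:ℝ), f n t) = a n := by
    intro n
    rw [hf]
    simp only
    rw [integral_const_mul, moment_eq hν n]
  have hIeq : (∫ t in Ioi (0:ℝ), t ^ (ν - 1) * Real.exp (-(t ^ 2) / 2 + (-z) * t)) =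
      ∑' n, a n := by
    rw [← hLHS, hswap]
    exact tsum_congr han
  have hsummable : Summable a := by
    apply Summable.of_norm_bounded
      (g := fun n => (∫⁻ t, ‖f n t‖₊ ∂(volume.restrict (Ioi 0))).toReal)
      (ENNReal.summable_toReal hbound)
    intro n
    rw [← han n]
    calc ‖∫ t in Ioi (0:ℝ), f n t‖
        ≤ (∫⁻ t, ENNReal.ofReal ‖f n t‖ ∂(volume.restrict (Ioi 0))).toReal :=
          norm_integral_le_lintegral_norm _
      _ = _ := by simp_rw [ofReal_norm, enorm_eq_nnnorm]
  have hinj2 : Function.Injective (fun k : ℕ => 2 * k) := fun a b h => by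
    simp only at h; omega
  have hinj2' : Function.Injective (fun k : ℕ => 2 * k + 1) := fun a b h => by
    simp only at h; omega
  have he : Summable (fun k => a (2 * k)) := hsummable.comp_injective hinj2
  have ho : Summable (fun k => a (2 * k + 1)) := hsummable.comp_injective hinj2'
  have hsplit : (∑' k, a (2 * k)) + (∑' k, a (2 * k + 1)) = ∑' n, a n :=
    tsum_even_add_odd he ho
  -- even terms
  have heven : ∀ k : ℕ, a (2 * k) = ((2:ℝ) ^ (ν / 2 - 1) * Real.Gamma (ν / 2)) *
      ((∏ j ∈ Finset.range k, (ν + 2 * (j : ℝ))) * z ^ (2 * k) / (Nat.factorial (2 * k))) := by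
    intro k
    rw [ha]
    simp only
    have hc : (ν + ((2 * k : ℕ) : ℝ)) / 2 = ν / 2 + k := by push_cast; ring
    rw [hc, Gamma_add_nat' (half_pos hν) k,
      show ν / 2 + (k : ℝ) - 1 = (ν / 2 - 1) + k by ring,
      Real.rpow_add two_pos, Real.rpow_natCast,
      Even.neg_pow (even_two_mul k) z]
    have h4 : (2:ℝ) ^ k * ∏ j ∈ Finset.range k, (ν / 2 + j)
        = ∏ j ∈ Finset.range k, (ν + 2 * (j : ℝ)) := by
      calc (2:ℝ) ^ k * ∏ j ∈ Finset.range k, (ν / 2 + j)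
          = (∏ _j ∈ Finset.range k, (2:ℝ)) * ∏ j ∈ Finset.range k, (ν / 2 + j) := by
            rw [Finset.prod_const, Finset.card_range]
        _ = ∏ j ∈ Finset.range k, 2 * (ν / 2 + j) := Finset.prod_mul_distrib.symm
        _ = ∏ j ∈ Finset.range k, (ν + 2 * (j : ℝ)) :=
            Finset.prod_congr rfl (fun j _ => by ring)
    rw [← h4]
    ring
  -- odd terms
  have hodd : ∀ k : ℕ, a (2 * k + 1) =
      (-((2:ℝ) ^ (ν / 2 - 1) * Real.sqrt 2 * Real.Gamma ((ν + 1) / 2))) *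
      ((∏ j ∈ Finset.range k, (ν + 2 * (j : ℝ) + 1)) * z ^ (2 * k + 1) /
        (Nat.factorial (2 * k + 1))) := by
    intro k
    rw [ha]
    simp only
    have hc : (ν + ((2 * k + 1 : ℕ) : ℝ)) / 2 = (ν + 1) / 2 + k := by push_cast; ring
    have hν1 : (0:ℝ) < (ν + 1) / 2 := by linarith
    rw [hc, Gamma_add_nat' hν1 k,
      show (ν + 1) / 2 + (k : ℝ) - 1 = (ν / 2 - 1) + (1/2 : ℝ) + k by ring,
      Real.rpow_add two_pos, Real.rpow_add two_pos, Real.rpow_natCast,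
      show (2:ℝ) ^ ((1:ℝ)/2) = Real.sqrt 2 by
        rw [Real.sqrt_eq_rpow],
      Odd.neg_pow ⟨k, by ring⟩ z]
    have h4 : (2:ℝ) ^ k * ∏ j ∈ Finset.range k, ((ν + 1) / 2 + j)
        = ∏ j ∈ Finset.range k, (ν + 2 * (j : ℝ) + 1) := by
      calc (2:ℝ) ^ k * ∏ j ∈ Finset.range k, ((ν + 1) / 2 + j)
          = (∏ _j ∈ Finset.range k, (2:ℝ)) * ∏ j ∈ Finset.range k, ((ν + 1) / 2 + j) := by
            rw [Finset.prod_const, Finset.card_range]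
        _ = ∏ j ∈ Finset.range k, 2 * ((ν + 1) / 2 + j) := Finset.prod_mul_distrib.symm
        _ = ∏ j ∈ Finset.range k, (ν + 2 * (j : ℝ) + 1) :=
            Finset.prod_congr rfl (fun j _ => by ring)
    rw [← h4]
    ring
  -- assemble
  have hEsum : (∑' k, a (2 * k)) =
      ((2:ℝ) ^ (ν / 2 - 1) * Real.Gamma (ν / 2)) * evenSeries ν z := by
    rw [tsum_congr heven, tsum_mul_left]
    rfl
  have hOsum : (∑' k, a (2 * k + 1)) =
      (-((2:ℝ) ^ (ν / 2 - 1) * Real.sqrt 2 * Real.Gamma ((ν + 1) / 2))) * oddSeries ν z := by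
    rw [tsum_congr hodd, tsum_mul_left]
    rfl
  have hIpos : 0 < ∫ t in Ioi (0:ℝ), t ^ (ν - 1) * Real.exp (-(t ^ 2) / 2 + (-z) * t) :=
    integral_pos_aux hν (-z)
  rw [hIeq, ← hsplit, hEsum, hOsum] at hIpos
  have hC : (0:ℝ) < (2:ℝ) ^ (ν / 2 - 1) := Real.rpow_pos_of_pos two_pos _
  have hfact : (2:ℝ) ^ (ν / 2 - 1) * Real.Gamma (ν / 2) * evenSeries ν z +
      -((2:ℝ) ^ (ν / 2 - 1) * Real.sqrt 2 * Real.Gamma ((ν + 1) / 2)) * oddSeries ν z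
      = (2:ℝ) ^ (ν / 2 - 1) * (Real.Gamma (ν / 2) * evenSeries ν z -
          Real.sqrt 2 * Real.Gamma ((ν + 1) / 2) * oddSeries ν z) := by ring
  rw [hfact] at hIpos
  rcases mul_pos_iff.mp hIpos with ⟨_, h⟩ | ⟨h, _⟩
  · exact h
  · linarith

/-- For every `ν > 0` and every `z ∈ ℝ`, the modified parabolic cylinder function is
strictly positive: `D̃_ν(z) > 0`. -/
theorem Dtilde_pos (ν : ℝ) (hν : 0 < ν) (z : ℝ) :
    0 < Dtilde ν z := by
  have hΓ1 : 0 < Real.Gamma ((ν + 1) / 2) := Real.Gamma_pos_of_pos (by linarith)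
  have hΓ2 : 0 < Real.Gamma (ν / 2) := Real.Gamma_pos_of_pos (half_pos hν)
  have hkey := key hν z
  have h : evenSeries ν z / Real.Gamma ((ν + 1) / 2) -
      Real.sqrt 2 * oddSeries ν z / Real.Gamma (ν / 2) =
      (Real.Gamma (ν / 2) * evenSeries ν z -
        Real.sqrt 2 * Real.Gamma ((ν + 1) / 2) * oddSeries ν z) /
        (Real.Gamma ((ν + 1) / 2) * Real.Gamma (ν / 2)) := by
    field_simp
  unfold Dtilde
  rw [h]
  have h1 : (0:ℝ) < (2:ℝ) ^ (-ν / 2) := Real.rpow_pos_of_pos two_pos _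
  have h2 : (0:ℝ) < Real.sqrt Real.pi := Real.sqrt_pos.mpr Real.pi_pos
  positivity
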